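/- In a cut quiver Q^{(d,n)}_C, if a vertex x is the source of one distinguished cut (d+1)-path (remainder of a distinguished (d+1)-cycle after removing its cut arrow) and the sink of another, then the two removed arrows have the same type. -/

import Mathlib

/-- Vertices of Q^{(d,n)}: nonnegative integer (d+1)-tuples with coordinate sum n - 1. -/
def QVtx (d n : ℕ) (A : Fin (d+1) → ℤ) : Prop :=
  (∀ j, 0 ≤ A j) ∧ (∑ j, A j) = (n : ℤ) - 1

/-- f_i = -E_i + E_{i+1} (indices cyclic mod d+1). -/
def fvec (d : ℕ) (i : Fin (d+1)) : Fin (d+1) → ℤ :=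
  fun j => (if j = i + 1 then 1 else 0) - (if j = i then 1 else 0)

/-- The k-th vertex of the (d+1)-cycle starting at A whose arrow types are
σ 0, σ 1, …, σ d in order. -/
def cycVert (d : ℕ) (A : Fin (d+1) → ℤ) (σ : Fin (d+1) → Fin (d+1)) (k : Fin (d+1)) :
    Fin (d+1) → ℤ :=
  A + ∑ l ∈ Finset.univ.filter (fun l : Fin (d+1) => (l : ℕ) < (k : ℕ)), fvec d (σ l)

/-- (A, σ) describes a (d+1)-cycle of Q^{(d,n)}: σ is a bijection on the set of
types (each type occurs exactly once in a (d+1)-cycle) and all vertices along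
the cycle are vertices of Q^{(d,n)}. -/
def IsCycle (d n : ℕ) (A : Fin (d+1) → ℤ) (σ : Fin (d+1) → Fin (d+1)) : Prop :=
  Function.Bijective σ ∧ ∀ k, QVtx d n (cycVert d A σ k)

/-- The cycle is distinguished: its types occur in the cyclic order
f_t, f_{t-1}, …, f_{t+1}. -/
def IsDist (d : ℕ) (σ : Fin (d+1) → Fin (d+1)) : Prop :=
  ∃ t : Fin (d+1), ∀ k, σ k = t - k

/-- A cut of Q^{(d,n)}: a set of arrows (encoded as pairs (tail, type)) containing
exactly one arrow from each (d+1)-cycle. -/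
def IsCut (d n : ℕ) (C : Set ((Fin (d+1) → ℤ) × Fin (d+1))) : Prop :=
  (∀ p ∈ C, QVtx d n p.1 ∧ QVtx d n (p.1 + fvec d p.2)) ∧
  ∀ A σ, IsCycle d n A σ → ∃! k : Fin (d+1), (cycVert d A σ k, σ k) ∈ C

/-! ### Auxiliary material -/

open scoped Fin.CommRing Fin.NatCast


def Evec (d : ℕ) (i : Fin (d+1)) : Fin (d+1) → ℤ := fun j => if j = i then 1 else 0

lemma fvec_eq (d : ℕ) (i : Fin (d+1)) : fvec d i = Evec d (i+1) - Evec d i := rfl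

lemma sum_fvec (d : ℕ) : ∑ i, fvec d i = 0 := by
  funext j
  rw [Finset.sum_apply]
  have h1 : ∀ i : Fin (d+1), fvec d i j
      = (if i = j - 1 then (1:ℤ) else 0) - (if i = j then 1 else 0) := by
    intro i
    simp only [fvec]
    congr 1
    · simp [eq_sub_iff_add_eq, eq_comm]
    · simp [eq_comm]
  simp only [h1, Finset.sum_sub_distrib, Finset.sum_ite_eq', Finset.mem_univ, if_true]
  simp

lemma sum_fvec_coord (d : ℕ) (i : Fin (d+1)) : ∑ j, fvec d i j = 0 := by
  simp [fvec, Finset.sum_sub_distrib, Finset.sum_ite_eq, Finset.sum_ite_eq']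

lemma filter_last (d : ℕ) :
    Finset.univ.filter (fun l : Fin (d+1) => (l : ℕ) < ((Fin.last d : Fin (d+1)) : ℕ))
      = Finset.univ.erase (Fin.last d) := by
  ext l
  have h1 := l.isLt
  have h2 : ((Fin.last d : Fin (d+1)) : ℕ) = d := Fin.val_last d
  simp only [Finset.mem_filter, Finset.mem_univ, true_and, Finset.mem_erase, and_true,
    Fin.ext_iff]
  omega

lemma cycVert_succ (d : ℕ) (A : Fin (d+1) → ℤ) (σ : Fin (d+1) → Fin (d+1))
    (hσ : Function.Bijective σ) (m : Fin (d+1)) :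
    cycVert d A σ (m+1) = cycVert d A σ m + fvec d (σ m) := by
  unfold cycVert
  rcases lt_or_eq_of_le (Nat.lt_succ_iff.mp m.isLt) with h | h
  · have hv : ((m+1 : Fin (d+1)) : ℕ) = (m : ℕ) + 1 := by
      rw [Fin.val_add_one_of_lt]
      exact Fin.lt_last_iff_ne_last.mpr (by simp [Fin.ext_iff]; omega)
    have hset : Finset.univ.filter (fun l : Fin (d+1) => (l : ℕ) < ((m+1 : Fin (d+1)) : ℕ))
        = insert m (Finset.univ.filter (fun l : Fin (d+1) => (l : ℕ) < (m : ℕ))) := by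
      ext l
      simp [hv, Nat.lt_succ_iff_lt_or_eq, Fin.ext_iff, or_comm]
      rw [Fin.le_iff_val_le_val, Fin.lt_iff_val_lt_val]; omega
    rw [hset, Finset.sum_insert (by simp)]
    abel
  · have hm : m = Fin.last d := by simp [Fin.ext_iff, h]
    subst hm
    have h1 : (Fin.last d + 1 : Fin (d+1)) = 0 := Fin.last_add_one d
    have hset0 : Finset.univ.filter
        (fun l : Fin (d+1) => (l : ℕ) < ((Fin.last d + 1 : Fin (d+1)) : ℕ)) = ∅ := by
      rw [h1]; simp
    rw [hset0, filter_last, Finset.sum_erase_eq_sub (Finset.mem_univ (Fin.last d)),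
      Function.Bijective.sum_comp hσ (fvec d), sum_fvec]
    simp

lemma cycVert_add_nat (d n : ℕ) (A : Fin (d+1) → ℤ) (σ : Fin (d+1) → Fin (d+1))
    (hcyc : IsCycle d n A σ) (t : Fin (d+1)) (ht : ∀ k, σ k = t - k) (m : Fin (d+1)) :
    ∀ s : ℕ, cycVert d A σ (m + (s : Fin (d+1)))
      = cycVert d A σ m + Evec d (σ m + 1) - Evec d (σ m + 1 - (s : Fin (d+1))) := by
  intro s
  induction s with
  | zero => simp
  | succ s ih =>
    have hcast : ((s+1 : ℕ) : Fin (d+1)) = (s : Fin (d+1)) + 1 := by push_cast; ring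
    rw [hcast, ← add_assoc, cycVert_succ d A σ hcyc.1, ih, ht (m + (s : Fin (d+1))), ht m]
    have e1 : t - (m + (s : Fin (d+1))) = (t - m + 1) - (s : Fin (d+1)) - 1 := by ring
    rw [e1, fvec_eq]
    have e2 : (t - m + 1) - (s : Fin (d+1)) - 1 + 1 = (t - m + 1) - (s : Fin (d+1)) := by ring
    have e3 : (t - m + 1) - (s : Fin (d+1)) - 1 = (t - m + 1) - ((s : Fin (d+1)) + 1) := by ring
    rw [e2, e3]
    abel

lemma one_le_cycVert (d n : ℕ) (A : Fin (d+1) → ℤ) (σ : Fin (d+1) → Fin (d+1))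
    (hcyc : IsCycle d n A σ) (t : Fin (d+1)) (ht : ∀ k, σ k = t - k)
    (m i : Fin (d+1)) (hi : i ≠ σ m + 1) : 1 ≤ cycVert d A σ m i := by
  have h := cycVert_add_nat d n A σ hcyc t ht m ((σ m + 1 - i : Fin (d+1)) : ℕ)
  rw [Fin.cast_val_eq_self] at h
  have hidx : σ m + 1 - (σ m + 1 - i) = i := by ring
  rw [hidx] at h
  have h0 := (hcyc.2 (m + (σ m + 1 - i))).1 i
  rw [h] at h0
  simp [Evec, hi] at h0
  linarith

lemma sum_coords_cycVert (d : ℕ) (A : Fin (d+1) → ℤ) (σ : Fin (d+1) → Fin (d+1))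
    (k : Fin (d+1)) : ∑ j, cycVert d A σ k j = ∑ j, A j := by
  simp only [cycVert, Pi.add_apply, Finset.sum_apply, Finset.sum_add_distrib]
  rw [Finset.sum_comm]
  simp [sum_fvec_coord]

lemma cycVert_nonneg_of_pos (d : ℕ) (x : Fin (d+1) → ℤ) (τ : Equiv.Perm (Fin (d+1)))
    (hx : ∀ i, 1 ≤ x i) (m : Fin (d+1)) (j : Fin (d+1)) : 0 ≤ cycVert d x (⇑τ) m j := by
  have hv : cycVert d x (⇑τ) m j
      = x j + ∑ l ∈ Finset.univ.filter (fun l : Fin (d+1) => (l:ℕ) < (m:ℕ)), fvec d (τ l) j := by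
    simp [cycVert, Finset.sum_apply]
  rw [hv]
  have hs2 : ∑ l ∈ Finset.univ.filter (fun l : Fin (d+1) => (l:ℕ) < (m:ℕ)),
      (if j = τ l then (1:ℤ) else 0) ≤ 1 := by
    calc ∑ l ∈ Finset.univ.filter (fun l : Fin (d+1) => (l:ℕ) < (m:ℕ)),
          (if j = τ l then (1:ℤ) else 0)
        ≤ ∑ l : Fin (d+1), (if j = τ l then (1:ℤ) else 0) :=
          Finset.sum_le_sum_of_subset_of_nonneg (Finset.filter_subset _ _)
            (fun i _ _ => by split <;> norm_num)
      _ = ∑ i : Fin (d+1), (if j = i then (1:ℤ) else 0) :=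
          Equiv.sum_comp τ (fun i => if j = i then (1:ℤ) else 0)
      _ = 1 := by simp
  have hs1 : (0:ℤ) ≤ ∑ l ∈ Finset.univ.filter (fun l : Fin (d+1) => (l:ℕ) < (m:ℕ)),
      (if j = τ l + 1 then (1:ℤ) else 0) :=
    Finset.sum_nonneg (fun i _ => by split <;> norm_num)
  have hsplit : ∑ l ∈ Finset.univ.filter (fun l : Fin (d+1) => (l:ℕ) < (m:ℕ)), fvec d (τ l) j
      = (∑ l ∈ Finset.univ.filter (fun l : Fin (d+1) => (l:ℕ) < (m:ℕ)),
          if j = τ l + 1 then (1:ℤ) else 0)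
        - (∑ l ∈ Finset.univ.filter (fun l : Fin (d+1) => (l:ℕ) < (m:ℕ)),
          if j = τ l then (1:ℤ) else 0) := by
    simp [fvec, Finset.sum_sub_distrib]
  have hxj := hx j
  rw [hsplit]
  linarith


/-- In a cut quiver Q^{(d,n)}_C, if a vertex x is the source of one
distinguished cut (d+1)-path (the head of the cut arrow of one distinguished
(d+1)-cycle) and the sink of another (the tail of the cut arrow of another
distinguished (d+1)-cycle), then the two removed arrows have the same type. -/
theorem adjacent_cut_cycles_same_type (d n : ℕ)
    (C : Set ((Fin (d+1) → ℤ) × Fin (d+1))) (hC : IsCut d n C)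
    (A A' : Fin (d+1) → ℤ) (σ σ' : Fin (d+1) → Fin (d+1)) (k k' : Fin (d+1))
    (hcyc : IsCycle d n A σ) (hdist : IsDist d σ)
    (hcyc' : IsCycle d n A' σ') (hdist' : IsDist d σ')
    (hkC : (cycVert d A σ k, σ k) ∈ C)
    (hk'C : (cycVert d A' σ' k', σ' k') ∈ C)
    (hx : cycVert d A σ k + fvec d (σ k) = cycVert d A' σ' k') :
    σ k = σ' k' := by
  obtain ⟨t, ht⟩ := hdist
  obtain ⟨t', ht'⟩ := hdist'
  by_contra hab
  have hd : 0 < d := by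
    rcases Nat.eq_zero_or_pos d with h | h
    · subst h
      have h1 := (σ k).isLt
      have h2 := (σ' k').isLt
      exact absurd (Fin.ext (by omega)) hab
    · exact h
  obtain ⟨hC1, hC2⟩ := hC
  have hxk1 : cycVert d A σ (k+1) = cycVert d A' σ' k' := by
    rw [cycVert_succ d A σ hcyc.1 k]; exact hx
  by_cases hab1 : σ k = σ' k' + 1
  · -- the two cycles coincide; two distinct cut arrows on one cycle
    have hσk1 : σ (k + 1) = σ' k' := by
      linear_combination ht (k+1) + hab1 - ht k
    obtain ⟨m, -, hu⟩ := hC2 A σ hcyc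
    have e1 := hu k hkC
    have e2 := hu (k+1) (by show (cycVert d A σ (k+1), σ (k+1)) ∈ C; rw [hxk1, hσk1]; exact hk'C)
    have h10 : (1 : Fin (d+1)) = 0 := by
      have hkk : k + 1 = k := e2.trans e1.symm
      linear_combination hkk
    have hval : ((1 : Fin (d+1)) : ℕ) = 0 := by rw [h10]; rfl
    rw [Fin.val_one'] at hval
    rw [Nat.mod_eq_of_lt (by omega)] at hval
    omega
  · -- x has all coordinates ≥ 1; build a third cycle through both cut arrows
    have hσs : σ (k+1) + 1 = σ k := by
      linear_combination ht (k+1) - ht k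
    have hxpos : ∀ i, 1 ≤ cycVert d A' σ' k' i := by
      intro i
      by_cases hia : i = σ k
      · apply one_le_cycVert d n A' σ' hcyc' t' ht' k' i
        rw [hia]; exact fun h => hab1 h
      · rw [← hxk1]
        apply one_le_cycVert d n A σ hcyc t ht (k+1) i
        rw [hσs]; exact hia
    have hlast0 : (Fin.last d) ≠ (0 : Fin (d+1)) := by
      intro h
      have := congrArg Fin.val h
      simp at this
      omega
    set s1 : Equiv.Perm (Fin (d+1)) := Equiv.swap 0 (σ' k') with hs1
    have hcb : s1 (Fin.last d) ≠ σ' k' := by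
      intro h
      apply hlast0
      apply s1.injective
      rw [h, hs1]
      simp
    set τ : Equiv.Perm (Fin (d+1)) := s1.trans (Equiv.swap (s1 (Fin.last d)) (σ k)) with hτ
    have hτ0 : τ 0 = σ' k' := by
      rw [hτ, Equiv.trans_apply]
      have h1 : s1 0 = σ' k' := by rw [hs1]; simp
      rw [h1]
      exact Equiv.swap_apply_of_ne_of_ne (Ne.symm hcb) (fun h => hab h.symm)
    have hτl : τ (Fin.last d) = σ k := by
      rw [hτ, Equiv.trans_apply]
      exact Equiv.swap_apply_left _ _
    set x := cycVert d A' σ' k' with hxd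
    have hcycτ : IsCycle d n x ⇑τ := by
      refine ⟨τ.bijective, fun m => ⟨cycVert_nonneg_of_pos d x τ hxpos m, ?_⟩⟩
      rw [sum_coords_cycVert]
      exact (hcyc'.2 k').2
    have hv0 : cycVert d x (⇑τ) 0 = x := by
      simp [cycVert]
    have hvl : cycVert d x (⇑τ) (Fin.last d) = cycVert d A σ k := by
      have h1 : cycVert d x (⇑τ) (Fin.last d) = x + (0 - fvec d (τ (Fin.last d))) := by
        unfold cycVert
        rw [filter_last, Finset.sum_erase_eq_sub (Finset.mem_univ (Fin.last d)),
          Function.Bijective.sum_comp τ.bijective (fvec d), sum_fvec]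
      rw [h1, hτl, ← hx]
      abel
    obtain ⟨m, -, hu⟩ := hC2 x ⇑τ hcycτ
    have e0 : (0 : Fin (d+1)) = m := hu 0 (by show (cycVert d x (⇑τ) 0, τ 0) ∈ C; rw [hv0, hτ0]; exact hk'C)
    have el : Fin.last d = m := hu (Fin.last d) (by show (cycVert d x (⇑τ) (Fin.last d), τ (Fin.last d)) ∈ C; rw [hvl, hτl]; exact hkC)
    exact hlast0 (el.trans e0.symm)
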